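/- Let n ≥ 2, f̃ : [0,∞) → [0,∞) continuous with compact support, r̄₀ ≥ n−1 a maximum point of f̃ on [n−1,∞), and r₀ > r̄₀. For r > r₀ and t > T₁ := r₀(r−r₀)/(r₀−(n−1)), the curve γ which equals r₀ on [0, t−T₁] and then moves outward with speed (r₀−(n−1))/r₀ to reach r at time t is admissible (satisfies |γ' + (n−1)/γ| ≤ 1) and gives ∫₀ᵗ f̃(γ(s)) ds ≥ f̃(r₀)(t − T₁). -/

import Mathlib

open MeasureTheory in
/-- Lower-bound construction (Case 1 of Theorem 5.3): the curve sitting at `r₀` and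
then moving outward with speed `(r₀−(n−1))/r₀` to reach `r` at time `t` is admissible
and gives `∫₀ᵗ f̃(γ) ≥ f̃(r₀)(t − T₁)`. -/
theorem stmt_12 (n : ℕ) (hn : 2 ≤ n) (ftil : ℝ → ℝ)
    (hf : Continuous ftil) (hnn : ∀ ρ, 0 ≤ ftil ρ)
    (rbar₀ r₀ r t : ℝ)
    (hrbar : (n : ℝ) - 1 ≤ rbar₀)
    (hmax : ∀ ρ, (n : ℝ) - 1 ≤ ρ → ftil ρ ≤ ftil rbar₀)
    (hr₀ : rbar₀ < r₀) (hr : r₀ < r)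
    (ht : r₀ * (r - r₀) / (r₀ - ((n : ℝ) - 1)) < t) :
    let T₁ := r₀ * (r - r₀) / (r₀ - ((n : ℝ) - 1))
    let γ : ℝ → ℝ := fun s =>
      if s ≤ t - T₁ then r₀ else r₀ + (s - (t - T₁)) * ((r₀ - ((n : ℝ) - 1)) / r₀)
    γ t = r ∧ (∀ s ∈ Set.Icc 0 t, 0 < γ s) ∧ ContinuousOn γ (Set.Icc 0 t) ∧
    (∀ᵐ s ∂(volume.restrict (Set.Icc 0 t)),
      ∃ d, HasDerivAt γ d s ∧ |d + ((n : ℝ) - 1) / γ s| ≤ 1) ∧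
    ftil r₀ * (t - T₁) ≤ ∫ s in (0:ℝ)..t, ftil (γ s) := by
  intro T₁ γ
  have hn1 : (1:ℝ) ≤ (n:ℝ) - 1 := by
    have : (2:ℝ) ≤ (n:ℝ) := by exact_mod_cast hn
    linarith
  have hden : 0 < r₀ - ((n:ℝ) - 1) := by linarith
  have hr₀pos : 0 < r₀ := by linarith
  have hcpos : 0 ≤ (r₀ - ((n:ℝ) - 1)) / r₀ := by positivity
  have hT₁pos : 0 < T₁ := by
    have : 0 < r₀ * (r - r₀) := by nlinarith
    exact div_pos this hden
  have hT₁val : T₁ * ((r₀ - ((n:ℝ) - 1)) / r₀) = r - r₀ := by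
    field_simp [T₁]
    exact div_mul_cancel₀ _ hden.ne'
  -- γ ≥ r₀ on relevant region and lower bound
  have hγ_ge : ∀ s, r₀ ≤ γ s := by
    intro s
    simp only [γ]
    split_ifs with h
    · exact le_rfl
    · have hs0 : 0 ≤ s - (t - T₁) := by linarith [not_le.mp h]
      nlinarith [mul_nonneg hs0 hcpos]
  have hγt : γ t = r := by
    simp only [γ]
    rw [if_neg (by linarith)]
    have : t - (t - T₁) = T₁ := by ring
    rw [this, hT₁val]; ring
  -- continuity: γ equals a max expression
  have hγeq : γ = fun s => r₀ + max (s - (t - T₁)) 0 * ((r₀ - ((n:ℝ) - 1)) / r₀) := by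
    funext s
    simp only [γ]
    split_ifs with h
    · rw [max_eq_right (by linarith), zero_mul, add_zero]
    · rw [max_eq_left (by linarith [not_le.mp h])]
  have hγcont : Continuous γ := by
    rw [hγeq]
    continuity
  refine ⟨hγt, fun s _ => lt_of_lt_of_le hr₀pos (hγ_ge s), hγcont.continuousOn, ?_, ?_⟩
  · -- a.e. derivative
    have h0 : ∀ᵐ (s : ℝ), s ≠ t - T₁ := by
      refine ae_iff.2 ?_
      simpa using measure_singleton (t - T₁)
    refine ae_restrict_of_ae (h0.mono fun s hs => ?_)
    rcases lt_or_gt_of_ne hs with hlt | hgt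
    · refine ⟨0, ?_, ?_⟩
      · have : γ =ᶠ[nhds s] fun _ => r₀ := by
          filter_upwards [Iio_mem_nhds hlt] with x hx
          simp only [γ, if_pos (le_of_lt (Set.mem_Iio.mp hx))]
        exact (hasDerivAt_const s r₀).congr_of_eventuallyEq this
      · have hγs : γ s = r₀ := by simp only [γ, if_pos hlt.le]
        rw [hγs, zero_add, abs_of_nonneg (by positivity)]
        rw [div_le_one hr₀pos]; linarith
    · refine ⟨(r₀ - ((n:ℝ) - 1)) / r₀, ?_, ?_⟩
      · have heq : γ =ᶠ[nhds s]
            fun x => r₀ + (x - (t - T₁)) * ((r₀ - ((n:ℝ) - 1)) / r₀) := by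
          filter_upwards [Ioi_mem_nhds hgt] with x hx
          simp only [γ, if_neg (not_le.mpr (Set.mem_Ioi.mp hx))]
        have : HasDerivAt (fun x => r₀ + (x - (t - T₁)) * ((r₀ - ((n:ℝ) - 1)) / r₀))
            ((r₀ - ((n:ℝ) - 1)) / r₀) s := by
          simpa using (((hasDerivAt_id s).sub_const (t - T₁)).mul_const
            ((r₀ - ((n:ℝ) - 1)) / r₀)).const_add r₀
        exact this.congr_of_eventuallyEq heq
      · have hγs : 0 < γ s := lt_of_lt_of_le hr₀pos (hγ_ge s)
        have h1 : ((n:ℝ) - 1) / γ s ≤ ((n:ℝ) - 1) / r₀ :=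
          div_le_div_of_nonneg_left (by linarith) hr₀pos (hγ_ge s)
        rw [abs_of_nonneg (by positivity)]
        have : (r₀ - ((n:ℝ) - 1)) / r₀ + ((n:ℝ) - 1) / r₀ = 1 := by
          field_simp
          ring
        linarith
  · -- integral bound
    have hint : ∀ a b : ℝ, IntervalIntegrable (fun s => ftil (γ s)) volume a b :=
      fun a b => ((hf.comp hγcont).intervalIntegrable a b)
    have hsplit : ∫ s in (0:ℝ)..t, ftil (γ s)
        = (∫ s in (0:ℝ)..(t - T₁), ftil (γ s)) + ∫ s in (t - T₁)..t, ftil (γ s) :=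
      (intervalIntegral.integral_add_adjacent_intervals (hint _ _) (hint _ _)).symm
    have h1 : ∫ s in (0:ℝ)..(t - T₁), ftil (γ s) = ftil r₀ * (t - T₁) := by
      rw [intervalIntegral.integral_congr (g := fun _ => ftil r₀) ?_]
      · rw [intervalIntegral.integral_const, smul_eq_mul, sub_zero, mul_comm]
      · intro x hx
        rw [Set.uIcc_of_le (by linarith)] at hx
        simp only [γ, if_pos hx.2]
    have h2 : 0 ≤ ∫ s in (t - T₁)..t, ftil (γ s) :=
      intervalIntegral.integral_nonneg (by linarith) (fun x _ => hnn _)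
    rw [hsplit, h1]; linarith
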